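/- With Z_s^k(x) = ‖x‖^{s−2}((s+n−2k) ι_x ε_x − (s−n+2k) ε_x ι_x) on ℝ^n \ {0}, and assuming s+n−2k−2 ≠ 0 and s−n+2k−2 ≠ 0, the partial derivative satisfies ∂_{x_j} Z_s^k(x) = Z_{s−2}^k(x) ∘ (s x_j Id + c_{k,s} ι_x ε_j + d_{k,s} ε_x ι_j), where c_{k,s} = 2s/(s+n−2k−2) and d_{k,s} = 2s/(s−n+2k−2). -/

import Mathlib

noncomputable section

/-- `ℝ^n` with its standard Euclidean inner product. -/
abbrev V (n : ℕ) := EuclideanSpace ℝ (Fin n)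

/-- A concrete (normed) model of the exterior algebra `Λ` of `(ℝ^n)^*`: the coordinates of a
form with respect to the standard basis `e_I^* = e_{i₁}^* ∧ ⋯ ∧ e_{i_k}^*` (`I` an increasingly
ordered subset of `{1,…,n}`). -/
abbrev Lam (n : ℕ) := EuclideanSpace ℝ (Finset (Fin n))

/-- The sign `(−1)^{#{i ∈ J | i < j}}`. -/
def sgn {n : ℕ} (j : Fin n) (J : Finset (Fin n)) : ℝ :=
  (-1 : ℝ) ^ (J.filter fun i => i < j).card

lemma sgn_sq {n : ℕ} (j : Fin n) (J : Finset (Fin n)) : sgn j J * sgn j J = 1 := by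
  rw [sgn, ← mul_pow]; norm_num

lemma sgn_insert_self {n : ℕ} (j : Fin n) (J : Finset (Fin n)) :
    sgn j (insert j J) = sgn j J := by
  rw [sgn, Finset.filter_insert, if_neg (lt_irrefl j)]; rfl

lemma sgn_erase_self {n : ℕ} (j : Fin n) (J : Finset (Fin n)) :
    sgn j (J.erase j) = sgn j J := by
  rw [sgn, Finset.filter_erase, Finset.erase_eq_of_notMem (by simp)]; rfl

lemma sgn_insert {n : ℕ} {i j : Fin n} {J : Finset (Fin n)} (hij : i ≠ j) (hi : i ∉ J) :
    sgn j (insert i J) = (if i < j then -1 else 1) * sgn j J := by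
  rw [sgn, sgn, Finset.filter_insert]
  by_cases h : i < j
  · rw [if_pos h, if_pos h, Finset.card_insert_of_notMem (by simp [hi]), pow_succ]; ring
  · rw [if_neg h, if_neg h, one_mul]

lemma sgn_erase {n : ℕ} {i j : Fin n} {J : Finset (Fin n)} (hij : i ≠ j) (hi : i ∈ J) :
    sgn j (J.erase i) = (if i < j then -1 else 1) * sgn j J := by
  have h := sgn_insert (J := J.erase i) hij (Finset.notMem_erase i J)
  rw [Finset.insert_erase hi] at h
  rw [h]; by_cases hlt : i < j <;> simp [hlt]

/-- Exterior multiplication by `e_j^*`, in coordinates. -/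
def rawEps {n : ℕ} (j : Fin n) : (Finset (Fin n) → ℝ) →ₗ[ℝ] (Finset (Fin n) → ℝ) where
  toFun c := fun J => if j ∈ J then sgn j J * c (J.erase j) else 0
  map_add' c d := by funext J; by_cases h : j ∈ J <;> simp [h, mul_add]
  map_smul' r c := by
    funext J; by_cases h : j ∈ J <;> simp [h, mul_comm, mul_left_comm]

/-- Interior product with `e_j`, in coordinates. -/
def rawIot {n : ℕ} (j : Fin n) : (Finset (Fin n) → ℝ) →ₗ[ℝ] (Finset (Fin n) → ℝ) where
  toFun c := fun J => if j ∉ J then sgn j J * c (insert j J) else 0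
  map_add' c d := by funext J; by_cases h : j ∈ J <;> simp [h, mul_add]
  map_smul' r c := by
    funext J; by_cases h : j ∈ J <;> simp [h, mul_comm, mul_left_comm]

lemma rawEps_apply {n : ℕ} (j : Fin n) (c : Finset (Fin n) → ℝ) (J : Finset (Fin n)) :
    rawEps j c J = if j ∈ J then sgn j J * c (J.erase j) else 0 := rfl

lemma rawIot_apply {n : ℕ} (j : Fin n) (c : Finset (Fin n) → ℝ) (J : Finset (Fin n)) :
    rawIot j c J = if j ∉ J then sgn j J * c (insert j J) else 0 := rfl

lemma raw_iot_eps {n : ℕ} (i j : Fin n) (c : Finset (Fin n) → ℝ) (J : Finset (Fin n)) :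
    rawIot i (rawEps j c) J + rawEps j (rawIot i c) J = if i = j then c J else 0 := by
  rcases eq_or_ne i j with rfl | hij
  · by_cases h : i ∈ J
    · simp [rawIot_apply, rawEps_apply, h, Finset.insert_erase h, sgn_erase_self,
        ← mul_assoc, sgn_sq]
    · simp [rawIot_apply, rawEps_apply, h, Finset.erase_insert h, sgn_insert_self,
        ← mul_assoc, sgn_sq]
  · rw [if_neg hij]
    by_cases hi : i ∈ J <;> by_cases hj : j ∈ J
    · simp [rawIot_apply, rawEps_apply, hi, hj, Finset.mem_erase, hij]
    · simp [rawIot_apply, rawEps_apply, hi, hj]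
    · simp only [rawIot_apply, rawEps_apply, hi, hj, not_false_iff, if_true, if_pos,
        Finset.mem_insert, Finset.mem_erase, hij, false_or, or_false, not_true,
        if_false, Ne.symm hij, and_true, true_and]
      rw [Finset.erase_insert_of_ne hij, sgn_insert hij hi, sgn_erase (Ne.symm hij) hj]
      rcases hij.lt_or_gt with h | h
      · simp only [h, if_true, if_neg h.asymm, hij, Ne.symm hij, ne_eq, not_false_iff,
          false_and, not_false_eq_true, and_false, if_pos]; ring_nf
      · simp only [h, if_true, if_neg h.asymm, hij, Ne.symm hij, ne_eq, not_false_iff,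
          false_and, not_false_eq_true, and_false, if_pos]; ring_nf
    · simp [rawIot_apply, rawEps_apply, hi, hj, Ne.symm hij]

lemma raw_iot_iot {n : ℕ} (i j : Fin n) (c : Finset (Fin n) → ℝ) (J : Finset (Fin n)) :
    rawIot i (rawIot j c) J + rawIot j (rawIot i c) J = 0 := by
  rcases eq_or_ne i j with rfl | hij
  · simp [rawIot_apply]
  · by_cases hi : i ∈ J <;> by_cases hj : j ∈ J
    · simp [rawIot_apply, hi, hj]
    · simp [rawIot_apply, hi, hj, Ne.symm hij]
    · simp [rawIot_apply, hi, hj, hij]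
    · simp only [rawIot_apply, hi, hj, not_false_iff, if_true, Finset.mem_insert, hij,
        Ne.symm hij, false_or, if_neg, or_false, if_pos]
      rw [Finset.insert_comm i j J, sgn_insert hij hi, sgn_insert (Ne.symm hij) hj]
      rcases hij.lt_or_gt with h | h
      · simp only [h, if_true, if_neg h.asymm, hij, Ne.symm hij, ne_eq, not_false_iff,
          false_and, not_false_eq_true, and_false, if_pos]; ring_nf
      · simp only [h, if_true, if_neg h.asymm, hij, Ne.symm hij, ne_eq, not_false_iff,
          false_and, not_false_eq_true, and_false, if_pos]; ring_nf

lemma raw_eps_eps {n : ℕ} (i j : Fin n) (c : Finset (Fin n) → ℝ) (J : Finset (Fin n)) :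
    rawEps i (rawEps j c) J + rawEps j (rawEps i c) J = 0 := by
  rcases eq_or_ne i j with rfl | hij
  · simp [rawEps_apply]
  · by_cases hi : i ∈ J <;> by_cases hj : j ∈ J
    · simp only [rawEps_apply, hi, hj, if_true, Finset.mem_erase, hij, Ne.symm hij,
        and_true, true_and, if_pos]
      rw [Finset.erase_right_comm, sgn_erase hij hi, sgn_erase (Ne.symm hij) hj]
      rcases hij.lt_or_gt with h | h
      · simp only [h, if_true, if_neg h.asymm, hij, Ne.symm hij, ne_eq, not_false_iff,
          false_and, not_false_eq_true, and_false, if_pos]; ring_nf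
      · simp only [h, if_true, if_neg h.asymm, hij, Ne.symm hij, ne_eq, not_false_iff,
          false_and, not_false_eq_true, and_false, if_pos]; ring_nf
    · simp [rawEps_apply, hi, hj, Finset.mem_erase]
    · simp [rawEps_apply, hi, hj, Finset.mem_erase]
    · simp [rawEps_apply, hi, hj]

/-- Exterior multiplication `ε_j` by `e_j^*`. -/
def epsB {n : ℕ} (j : Fin n) : Lam n →ₗ[ℝ] Lam n :=
  (WithLp.linearEquiv 2 ℝ _).symm.toLinearMap ∘ₗ rawEps j ∘ₗ (WithLp.linearEquiv 2 ℝ _).toLinearMap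

/-- Interior product `ι_j` with `e_j`. -/
def iotB {n : ℕ} (j : Fin n) : Lam n →ₗ[ℝ] Lam n :=
  (WithLp.linearEquiv 2 ℝ _).symm.toLinearMap ∘ₗ rawIot j ∘ₗ (WithLp.linearEquiv 2 ℝ _).toLinearMap

/-- Exterior multiplication `ε_x` by the covector `x^*` dual to `x ∈ ℝ^n`. -/
def epsV {n : ℕ} (x : V n) : Lam n →ₗ[ℝ] Lam n := ∑ j : Fin n, x j • epsB j

/-- Interior product `ι_x` with the vector `x ∈ ℝ^n`. -/
def iotV {n : ℕ} (x : V n) : Lam n →ₗ[ℝ] Lam n := ∑ j : Fin n, x j • iotB j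

/-- The partial derivative `∂_j` of a `Λ`-valued function, in the direction `e_j`. -/
def pd {n : ℕ} (j : Fin n) (f : V n → Lam n) : V n → Lam n :=
  fun x => fderiv ℝ f x (EuclideanSpace.single j (1 : ℝ))

/-- The exterior differential `d = Σ_j ε_j ∂_j`. -/
def extd {n : ℕ} (f : V n → Lam n) : V n → Lam n :=
  fun x => ∑ j : Fin n, epsB j (pd j f x)

/-- The co-differential `δ = −Σ_j ι_j ∂_j`. -/
def cod {n : ℕ} (f : V n → Lam n) : V n → Lam n :=
  fun x => -∑ j : Fin n, iotB j (pd j f x)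

/-- The `End(Λ^k)`-valued function
`Z_s^k(x) = ‖x‖^{s−2}((s+n−2k) ι_x ε_x − (s−n+2k) ε_x ι_x)`. -/
def Zop {n : ℕ} (s : ℝ) (k : ℕ) (x : V n) : Lam n →ₗ[ℝ] Lam n :=
  Real.rpow ‖x‖ (s - 2) •
    ((s + n - 2 * k) • (iotV x ∘ₗ epsV x) - (s - n + 2 * k) • (epsV x ∘ₗ iotV x))

/-! ### Basic anticommutation relations -/

lemma iotB_epsB_anticomm {n : ℕ} (i j : Fin n) (ω : Lam n) :
    iotB i (epsB j ω) + epsB j (iotB i ω) = if i = j then ω else 0 := by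
  ext J
  simp only [PiLp.add_apply, apply_ite (fun (u : Lam n) => u J), PiLp.zero_apply]
  exact raw_iot_eps i j ω J

lemma iotB_iotB_anticomm {n : ℕ} (i j : Fin n) (ω : Lam n) :
    iotB i (iotB j ω) + iotB j (iotB i ω) = 0 := by
  ext J
  simp only [PiLp.add_apply, PiLp.zero_apply]
  exact raw_iot_iot i j ω J

lemma epsB_epsB_anticomm {n : ℕ} (i j : Fin n) (ω : Lam n) :
    epsB i (epsB j ω) + epsB j (epsB i ω) = 0 := by
  ext J
  simp only [PiLp.add_apply, PiLp.zero_apply]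
  exact raw_eps_eps i j ω J

lemma iotV_apply {n : ℕ} (v : V n) (u : Lam n) : iotV v u = ∑ i : Fin n, v i • iotB i u := by
  simp [iotV]

lemma epsV_apply {n : ℕ} (v : V n) (u : Lam n) : epsV v u = ∑ i : Fin n, v i • epsB i u := by
  simp [epsV]

lemma iotV_epsV_anticomm {n : ℕ} (v w : V n) (ω : Lam n) :
    iotV v (epsV w ω) + epsV w (iotV v ω) = (∑ i : Fin n, v i * w i) • ω := by
  simp only [iotV_apply, epsV_apply, map_sum, map_smul, Finset.smul_sum]
  rw [Finset.sum_comm (γ := Fin n) (s := Finset.univ) (t := Finset.univ)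
    (f := fun a b => w a • v b • iotB b (epsB a ω)), ← Finset.sum_add_distrib, Finset.sum_smul]
  refine Finset.sum_congr rfl fun i _ => ?_
  rw [← Finset.sum_add_distrib]
  have hterm : ∀ l, w l • v i • iotB i (epsB l ω) + v i • w l • epsB l (iotB i ω)
      = (v i * w l) • (iotB i (epsB l ω) + epsB l (iotB i ω)) := fun l => by
    rw [smul_add, smul_smul, smul_smul, mul_comm (w l) (v i)]
  simp only [hterm, iotB_epsB_anticomm, smul_ite, smul_zero]
  rw [Finset.sum_ite_eq Finset.univ i (fun l => (v i * w l) • ω)]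
  simp

lemma iotV_iotV_self {n : ℕ} (v : V n) (ω : Lam n) : iotV v (iotV v ω) = 0 := by
  have hdouble : iotV v (iotV v ω) + iotV v (iotV v ω) = 0 := by
    conv_lhs => rw [iotV_apply, iotV_apply v ω]
    simp only [map_sum, map_smul, Finset.smul_sum]
    nth_rewrite 2 [Finset.sum_comm (γ := Fin n) (s := Finset.univ) (t := Finset.univ)
      (f := fun a b => v a • v b • iotB a (iotB b ω))]
    rw [← Finset.sum_add_distrib]
    refine Finset.sum_eq_zero fun i _ => ?_
    rw [← Finset.sum_add_distrib]
    refine Finset.sum_eq_zero fun l _ => ?_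
    have : v i • v l • iotB i (iotB l ω) + v l • v i • iotB l (iotB i ω)
        = (v i * v l) • (iotB i (iotB l ω) + iotB l (iotB i ω)) := by
      rw [smul_add, smul_smul, smul_smul, mul_comm (v l) (v i)]
    rw [this, iotB_iotB_anticomm, smul_zero]
  have h2 : (2 : ℝ) • iotV v (iotV v ω) = 0 := by rw [two_smul]; exact hdouble
  have := smul_eq_zero.mp h2
  simpa using this

lemma epsV_epsV_self {n : ℕ} (v : V n) (ω : Lam n) : epsV v (epsV v ω) = 0 := by
  have hdouble : epsV v (epsV v ω) + epsV v (epsV v ω) = 0 := by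
    conv_lhs => rw [epsV_apply, epsV_apply v ω]
    simp only [map_sum, map_smul, Finset.smul_sum]
    nth_rewrite 2 [Finset.sum_comm (γ := Fin n) (s := Finset.univ) (t := Finset.univ)
      (f := fun a b => v a • v b • epsB a (epsB b ω))]
    rw [← Finset.sum_add_distrib]
    refine Finset.sum_eq_zero fun i _ => ?_
    rw [← Finset.sum_add_distrib]
    refine Finset.sum_eq_zero fun l _ => ?_
    have : v i • v l • epsB i (epsB l ω) + v l • v i • epsB l (epsB i ω)
        = (v i * v l) • (epsB i (epsB l ω) + epsB l (epsB i ω)) := by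
      rw [smul_add, smul_smul, smul_smul, mul_comm (v l) (v i)]
    rw [this, epsB_epsB_anticomm, smul_zero]
  have h2 : (2 : ℝ) • epsV v (epsV v ω) = 0 := by rw [two_smul]; exact hdouble
  have := smul_eq_zero.mp h2
  simpa using this

lemma iotV_single {n : ℕ} (j : Fin n) (u : Lam n) :
    iotV (EuclideanSpace.single j (1 : ℝ)) u = iotB j u := by
  rw [iotV_apply]
  simp [EuclideanSpace.single_apply, ite_smul]

lemma epsV_single {n : ℕ} (j : Fin n) (u : Lam n) :
    epsV (EuclideanSpace.single j (1 : ℝ)) u = epsB j u := by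
  rw [epsV_apply]
  simp [EuclideanSpace.single_apply, ite_smul]

/-! ### The quadratic expansion and its derivative -/

lemma iotV_epsV_expand {n : ℕ} (z : V n) (ω : Lam n) :
    iotV z (epsV z ω) = ∑ i : Fin n, ∑ l : Fin n, (z i * z l) • iotB i (epsB l ω) := by
  rw [iotV_apply, epsV_apply]
  simp only [map_sum, map_smul, Finset.smul_sum, smul_smul]

lemma epsV_iotV_expand {n : ℕ} (z : V n) (ω : Lam n) :
    epsV z (iotV z ω) = ∑ i : Fin n, ∑ l : Fin n, (z i * z l) • epsB i (iotB l ω) := by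
  rw [epsV_apply, iotV_apply]
  simp only [map_sum, map_smul, Finset.smul_sum, smul_smul]

lemma hasFDerivAt_quad {n : ℕ} (T : Fin n → Fin n → Lam n) (x : V n) :
    HasFDerivAt (fun z : V n => ∑ i : Fin n, ∑ l : Fin n, (z i * z l) • T i l)
      (∑ i : Fin n, ∑ l : Fin n,
        ((x i • (EuclideanSpace.proj l : V n →L[ℝ] ℝ)
          + x l • (EuclideanSpace.proj i : V n →L[ℝ] ℝ)).smulRight (T i l))) x := by
  apply HasFDerivAt.fun_sum
  intro i _
  apply HasFDerivAt.fun_sum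
  intro l _
  have hi : HasFDerivAt (fun z : V n => z i) (EuclideanSpace.proj i : V n →L[ℝ] ℝ) x :=
    (EuclideanSpace.proj i : V n →L[ℝ] ℝ).hasFDerivAt
  have hl : HasFDerivAt (fun z : V n => z l) (EuclideanSpace.proj l : V n →L[ℝ] ℝ) x :=
    (EuclideanSpace.proj l : V n →L[ℝ] ℝ).hasFDerivAt
  exact (hi.mul hl).smul_const (T i l)

lemma quad_deriv_apply {n : ℕ} (T : Fin n → Fin n → Lam n) (x : V n) (j : Fin n) :
    (∑ i : Fin n, ∑ l : Fin n,
        ((x i • (EuclideanSpace.proj l : V n →L[ℝ] ℝ)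
          + x l • (EuclideanSpace.proj i : V n →L[ℝ] ℝ)).smulRight (T i l)))
      (EuclideanSpace.single j (1 : ℝ))
      = ∑ i : Fin n, x i • T i j + ∑ l : Fin n, x l • T j l := by
  simp only [ContinuousLinearMap.coe_sum', Finset.sum_apply,
    ContinuousLinearMap.smulRight_apply, ContinuousLinearMap.add_apply,
    ContinuousLinearMap.coe_smul', Pi.smul_apply, PiLp.proj_apply,
    EuclideanSpace.single_apply, smul_eq_mul, mul_ite, mul_one, mul_zero, add_smul,
    ite_smul, zero_smul, Finset.sum_add_distrib]
  congr 1
  · refine Finset.sum_congr rfl fun i _ => ?_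
    rw [Finset.sum_ite_eq' Finset.univ j (fun l => x i • T i l)]
    simp
  · rw [Finset.sum_comm]
    refine Finset.sum_congr rfl fun l _ => ?_
    rw [Finset.sum_ite_eq' Finset.univ j (fun i => x l • T i l)]
    simp

/-- The derivative identity
`∂_{x_j} Z_s^k(x) = Z_{s−2}^k(x) ∘ (s x_j Id + c_{k,s} ι_x ε_j + d_{k,s} ε_x ι_j)` with
`c_{k,s} = 2s/(s+n−2k−2)`, `d_{k,s} = 2s/(s−n+2k−2)`. -/
theorem Zop_deriv {n k : ℕ} (s : ℝ) (x : V n) (hx : x ≠ 0)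
    (h1 : s + n - 2 * k - 2 ≠ 0) (h2 : s - n + 2 * k - 2 ≠ 0) (j : Fin n) (ω : Lam n) :
    fderiv ℝ (fun z => Zop s k z ω) x (EuclideanSpace.single j (1 : ℝ))
      = Zop (s - 2) k x
          ((s * x j) • ω
            + (2 * s / (s + n - 2 * k - 2)) • iotV x (epsB j ω)
            + (2 * s / (s - n + 2 * k - 2)) • epsV x (iotB j ω)) := by
  have hxnorm : (0:ℝ) < ‖x‖ := norm_pos_iff.mpr hx
  have hxne : ‖x‖ ≠ 0 := ne_of_gt hxnorm
  -- rewrite the function in a differentiable form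
  have hfun : (fun z : V n => Zop s k z ω)
      = fun z : V n => ((‖z‖ ^ 2 : ℝ) ^ ((s - 2) / 2 : ℝ)) •
          ((s + n - 2 * k) • (∑ i : Fin n, ∑ l : Fin n, (z i * z l) • iotB i (epsB l ω))
            - (s - n + 2 * k) • (∑ i : Fin n, ∑ l : Fin n, (z i * z l) • epsB i (iotB l ω))) := by
    funext z
    have hpow : ((‖z‖ ^ 2 : ℝ) ^ ((s - 2) / 2 : ℝ)) = Real.rpow ‖z‖ (s - 2) := by
      rw [← Real.rpow_natCast ‖z‖ 2, ← Real.rpow_mul (norm_nonneg z)]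
      norm_num
      congr 1
      ring
    rw [hpow]
    simp only [Zop, LinearMap.smul_apply, LinearMap.sub_apply, LinearMap.comp_apply,
      iotV_epsV_expand, epsV_iotV_expand]
  have hsq := (hasStrictFDerivAt_norm_sq x).hasFDerivAt
  have hscal : HasFDerivAt (fun z : V n => (‖z‖ ^ 2 : ℝ) ^ ((s - 2) / 2 : ℝ))
      ((((s - 2) / 2) * (‖x‖ ^ 2) ^ ((s - 2) / 2 - 1)) • (2 • (innerSL ℝ x))) x :=
    hsq.rpow_const (Or.inl (by positivity))
  have hA := hasFDerivAt_quad (fun i l => iotB i (epsB l ω)) x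
  have hB := hasFDerivAt_quad (fun i l => epsB i (iotB l ω)) x
  have hvec := (hA.fun_const_smul ((s : ℝ) + n - 2 * k)).fun_sub (hB.fun_const_smul ((s : ℝ) - n + 2 * k))
  have hmain := hscal.fun_smul hvec
  rw [hfun, hmain.fderiv]
  clear hmain hvec hA hB hscal hsq hfun
  -- evaluate the derivative
  rw [ContinuousLinearMap.add_apply, ContinuousLinearMap.smul_apply,
    ContinuousLinearMap.smulRight_apply, ContinuousLinearMap.sub_apply,
    ContinuousLinearMap.smul_apply, ContinuousLinearMap.smul_apply,
    quad_deriv_apply, quad_deriv_apply]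
  have hsum1 : ∑ i : Fin n, x i • iotB i (epsB j ω) = iotV x (epsB j ω) :=
    (iotV_apply x (epsB j ω)).symm
  have hsum2 : ∑ l : Fin n, x l • iotB j (epsB l ω) = iotB j (epsV x ω) := by
    rw [epsV_apply, map_sum]; simp only [map_smul]
  have hsum3 : ∑ i : Fin n, x i • epsB i (iotB j ω) = epsV x (iotB j ω) :=
    (epsV_apply x (iotB j ω)).symm
  have hsum4 : ∑ l : Fin n, x l • epsB j (iotB l ω) = epsB j (iotV x ω) := by
    rw [iotV_apply, map_sum]; simp only [map_smul]
  rw [hsum1, hsum2, hsum3, hsum4, ← iotV_epsV_expand, ← epsV_iotV_expand]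
  simp only [ContinuousLinearMap.smul_apply, innerSL_apply_apply,
    EuclideanSpace.inner_single_right, conj_trivial, nsmul_eq_mul, Nat.cast_ofNat,
    one_mul, smul_eq_mul]
  -- algebraic identities
  set R : ℝ := ‖x‖ ^ 2 with hRdef
  have hRsum : (∑ i : Fin n, x i * x i) = R := by
    rw [hRdef, ← real_inner_self_eq_norm_sq, PiLp.inner_apply]
    simp only [RCLike.inner_apply, conj_trivial]
  have hR : ∀ u : Lam n, iotV x (epsV x u) + epsV x (iotV x u) = R • u := fun u => by
    rw [iotV_epsV_anticomm, hRsum]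
  have hE2a : iotB j (epsV x ω) = x j • ω - epsV x (iotB j ω) := by
    have h := iotV_epsV_anticomm (EuclideanSpace.single j (1:ℝ)) x ω
    rw [iotV_single, iotV_single] at h
    rw [show (∑ i : Fin n, (EuclideanSpace.single j (1:ℝ)) i * x i) = x j by
      simp [EuclideanSpace.single_apply, ite_mul, Finset.sum_ite_eq' Finset.univ]] at h
    exact eq_sub_of_add_eq h
  have hE2b : epsB j (iotV x ω) = x j • ω - iotV x (epsB j ω) := by
    have h := iotV_epsV_anticomm x (EuclideanSpace.single j (1:ℝ)) ω
    rw [epsV_single, epsV_single] at h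
    rw [show (∑ i : Fin n, x i * (EuclideanSpace.single j (1:ℝ)) i) = x j by
      simp [EuclideanSpace.single_apply, mul_ite, Finset.sum_ite_eq' Finset.univ]] at h
    exact eq_sub_of_add_eq' h
  have h3a : iotV x (epsV x (iotV x (epsB j ω))) = R • iotV x (epsB j ω) := by
    rw [eq_sub_of_add_eq' (hR (epsB j ω)), map_sub, map_smul,
      iotV_iotV_self x (epsV x (epsB j ω)), sub_zero]
  have h3b : epsV x (iotV x (iotV x (epsB j ω))) = 0 := by
    rw [iotV_iotV_self x (epsB j ω), map_zero]
  have h4a : iotV x (epsV x (epsV x (iotB j ω))) = 0 := by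
    rw [epsV_epsV_self x (iotB j ω), map_zero]
  have h4b : epsV x (iotV x (epsV x (iotB j ω))) = R • epsV x (iotB j ω) := by
    rw [eq_sub_of_add_eq (hR (iotB j ω)), map_sub, map_smul,
      epsV_epsV_self x (iotV x (iotB j ω)), sub_zero]
  have hu2 : epsV x (iotV x ω) = R • ω - iotV x (epsV x ω) :=
    eq_sub_of_add_eq' (hR ω)
  -- expand the right-hand side
  simp only [Zop, LinearMap.smul_apply, LinearMap.sub_apply, LinearMap.comp_apply,
    map_add, map_smul, h3a, h3b, h4a, h4b]
  -- scalar powers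
  have hq1 : ((‖x‖ ^ 2 : ℝ) ^ ((s - 2) / 2 : ℝ)) = ‖x‖ ^ ((s:ℝ) - 4) * R := by
    rw [hRdef, ← Real.rpow_natCast ‖x‖ 2, ← Real.rpow_mul (norm_nonneg x),
      ← Real.rpow_add hxnorm]
    congr 1
    push_cast
    ring
  have hq2 : ((‖x‖ ^ 2 : ℝ) ^ ((s - 2) / 2 - 1 : ℝ)) = ‖x‖ ^ ((s:ℝ) - 4) := by
    rw [← Real.rpow_natCast ‖x‖ 2, ← Real.rpow_mul (norm_nonneg x)]
    congr 1
    push_cast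
    ring
  have hr : Real.rpow ‖x‖ (s - 2 - 2) = ‖x‖ ^ ((s:ℝ) - 4) := by
    rw [show s - 2 - 2 = s - 4 by ring]
    rfl
  rw [hq1, hq2, hr, hE2a, hE2b, hu2]
  match_scalars
  · field_simp
    ring
  · field_simp
    ring
  · field_simp
    ring
  · field_simp
    ring
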